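/- Under the assumptions of the attitude error kinematics (b ∈ S², Ṙ = R hat(Ω), Ṙ_d = hat(ω_d) R_d, r_d = R_d b, e_Ω = Ω − Rᵀω_d, e_r = (Rᵀ r_d) × b), the time derivative of e_r satisfies hat(ė_r) = hat(hat(b) hat(e_Ω) Rᵀ R_d b), and consequently ‖ė_r‖ ≤ ‖e_Ω‖. -/

import Mathlib

open Matrix

attribute [local instance] Matrix.normedAddCommGroup Matrix.normedSpace

/-- The hat map sending `x ∈ ℝ³` to the skew-symmetric matrix with `hat x * v = x ⨯₃ v`. -/
def hat (x : Fin 3 → ℝ) : Matrix (Fin 3) (Fin 3) ℝ :=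
  !![0, -x 2, x 1; x 2, 0, -x 0; -x 1, x 0, 0]

/-- Euclidean norm on `ℝ³`. -/
noncomputable def enorm3 (v : Fin 3 → ℝ) : ℝ := Real.sqrt (v ⬝ᵥ v)

lemma entry_deriv {f : ℝ → Matrix (Fin 3) (Fin 3) ℝ} {f' : Matrix (Fin 3) (Fin 3) ℝ} {t : ℝ}
    (h : HasDerivAt f f' t) (i j : Fin 3) :
    HasDerivAt (fun s => f s i j) (f' i j) t :=
  hasDerivAt_pi.1 (hasDerivAt_pi.1 h i) j

lemma mulVec_deriv {A : ℝ → Matrix (Fin 3) (Fin 3) ℝ} {A' : Matrix (Fin 3) (Fin 3) ℝ}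
    {w : ℝ → Fin 3 → ℝ} {w' : Fin 3 → ℝ} {t : ℝ}
    (hA : HasDerivAt A A' t) (hw : HasDerivAt w w' t) :
    HasDerivAt (fun s => (A s).mulVec (w s)) (A'.mulVec (w t) + (A t).mulVec w') t := by
  rw [hasDerivAt_pi]
  intro i
  have hwk : ∀ k, HasDerivAt (fun s => w s k) (w' k) t := fun k => hasDerivAt_pi.1 hw k
  simp only [mulVec, dotProduct, Fin.sum_univ_three, Pi.add_apply]
  have := (((entry_deriv hA i 0).mul (hwk 0)).add ((entry_deriv hA i 1).mul (hwk 1))).add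
    ((entry_deriv hA i 2).mul (hwk 2))
  convert this using 1
  · rfl
  ring

lemma transpose_deriv {A : ℝ → Matrix (Fin 3) (Fin 3) ℝ} {A' : Matrix (Fin 3) (Fin 3) ℝ} {t : ℝ}
    (hA : HasDerivAt A A' t) : HasDerivAt (fun s => (A s)ᵀ) A'ᵀ t := by
  refine hasDerivAt_pi.2 fun i => hasDerivAt_pi.2 fun j => ?_
  exact entry_deriv hA j i

lemma cross_const_deriv {v : ℝ → Fin 3 → ℝ} {v' b : Fin 3 → ℝ} {t : ℝ}
    (hv : HasDerivAt v v' t) : HasDerivAt (fun s => (v s) ⨯₃ b) (v' ⨯₃ b) t := by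
  rw [hasDerivAt_pi]
  intro i
  have hvk : ∀ k, HasDerivAt (fun s => v s k) (v' k) t := fun k => hasDerivAt_pi.1 hv k
  fin_cases i <;> simp only [cross_apply, Matrix.cons_val_zero, Matrix.cons_val_one,
    Matrix.head_cons, Matrix.cons_val_two, Matrix.tail_cons] <;>
  exact ((hvk _).mul_const _).sub ((hvk _).mul_const _)

lemma hat_mulVec (x v : Fin 3 → ℝ) : (hat x).mulVec v = x ⨯₃ v := by
  funext i
  fin_cases i <;>
    simp [hat, cross_apply, mulVec, dotProduct, Fin.sum_univ_three] <;> ring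

lemma cross_adj (M : Matrix (Fin 3) (Fin 3) ℝ) (x y : Fin 3 → ℝ) :
    (M.mulVec x) ⨯₃ (M.mulVec y) = (M.adjugate)ᵀ.mulVec (x ⨯₃ y) := by
  funext i
  fin_cases i <;>
    simp [cross_apply, mulVec, dotProduct, Fin.sum_univ_three, adjugate_fin_three,
      transpose_apply] <;> ring

lemma rot_cross (M : Matrix (Fin 3) (Fin 3) ℝ) (h1 : Mᵀ * M = 1) (h2 : M.det = 1)
    (x y : Fin 3 → ℝ) : M.mulVec (x ⨯₃ y) = (M.mulVec x) ⨯₃ (M.mulVec y) := by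
  have h1' : M * Mᵀ = 1 := mul_eq_one_comm.mp h1
  have hadj : M.adjugate = Mᵀ := by
    calc M.adjugate = M.adjugate * (M * Mᵀ) := by rw [h1', mul_one]
    _ = (M.adjugate * M) * Mᵀ := by rw [mul_assoc]
    _ = Mᵀ := by rw [Matrix.adjugate_mul, h2, one_smul, one_mul]
  rw [cross_adj, hadj, transpose_transpose]

lemma enorm_mulVec_orth (M : Matrix (Fin 3) (Fin 3) ℝ) (h : Mᵀ * M = 1) (v : Fin 3 → ℝ) :
    enorm3 (M.mulVec v) = enorm3 v := by
  unfold enorm3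
  congr 1
  calc M.mulVec v ⬝ᵥ M.mulVec v = (M.mulVec v) ᵥ* M ⬝ᵥ v := by
        rw [Matrix.dotProduct_mulVec]
      _ = Mᵀ.mulVec (M.mulVec v) ⬝ᵥ v := by rw [Matrix.mulVec_transpose]
      _ = v ⬝ᵥ v := by rw [Matrix.mulVec_mulVec, h, Matrix.one_mulVec]

lemma enorm_nonneg (v : Fin 3 → ℝ) : 0 ≤ enorm3 v := Real.sqrt_nonneg _

lemma enorm_cross_le (x y : Fin 3 → ℝ) : enorm3 (x ⨯₃ y) ≤ enorm3 x * enorm3 y := by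
  unfold enorm3
  have hx : (0:ℝ) ≤ x ⬝ᵥ x := Finset.sum_nonneg fun i _ => mul_self_nonneg _
  rw [← Real.sqrt_mul hx]
  apply Real.sqrt_le_sqrt
  have key : (x ⨯₃ y) ⬝ᵥ (x ⨯₃ y) = (x ⬝ᵥ x) * (y ⬝ᵥ y) - (x ⬝ᵥ y) ^ 2 := by
    simp [cross_apply, dotProduct, Fin.sum_univ_three]; ring
  nlinarith [sq_nonneg (x ⬝ᵥ y)]

lemma hat_transpose (x : Fin 3 → ℝ) : (hat x)ᵀ = -(hat x) := by
  ext i j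
  fin_cases i <;> fin_cases j <;> simp [hat]

lemma cross_algebra (a p u c : Fin 3 → ℝ) :
    (-(a ⨯₃ u) + (p ⨯₃ u)) ⨯₃ c = c ⨯₃ ((a - p) ⨯₃ u) := by
  funext i
  fin_cases i <;> simp [cross_apply] <;> ring

theorem deriv_error_vector_bound
    (b : Fin 3 → ℝ) (hb : enorm3 b = 1)
    (R Rd : ℝ → Matrix (Fin 3) (Fin 3) ℝ) (Ω ωd : ℝ → Fin 3 → ℝ)
    (hSO : ∀ t, (R t)ᵀ * R t = 1 ∧ (R t).det = 1)
    (hSOd : ∀ t, (Rd t)ᵀ * Rd t = 1 ∧ (Rd t).det = 1)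
    (hR : ∀ t, HasDerivAt R (R t * hat (Ω t)) t)
    (hRd : ∀ t, HasDerivAt Rd (hat (ωd t) * Rd t) t)
    -- the angular velocity error and the configuration error vector
    (eΩ : ℝ → Fin 3 → ℝ) (heΩ : ∀ t, eΩ t = Ω t - (R t)ᵀ.mulVec (ωd t))
    (er : ℝ → Fin 3 → ℝ)
    (her : ∀ t, er t = ((R t)ᵀ.mulVec ((Rd t).mulVec b)) ⨯₃ b)
    (t : ℝ) (er' : Fin 3 → ℝ) (hder : HasDerivAt er er' t) :
    hat er' = hat ((hat b * hat (eΩ t) * (R t)ᵀ * Rd t).mulVec b) ∧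
    enorm3 er' ≤ enorm3 (eΩ t) := by
  obtain ⟨hORt, hdetRt⟩ := hSO t
  obtain ⟨hORd, hdetRd⟩ := hSOd t
  have hRRT : R t * (R t)ᵀ = 1 := mul_eq_one_comm.mp hORt
  set rb := (Rd t).mulVec b with hrb
  set u := (R t)ᵀ.mulVec rb with hudef
  -- derivative computation
  have hb' : HasDerivAt (fun _ : ℝ => b) 0 t := hasDerivAt_const t b
  have hw : HasDerivAt (fun s => (Rd s).mulVec b)
      ((hat (ωd t) * Rd t).mulVec b + (Rd t).mulVec 0) t := mulVec_deriv (hRd t) hb'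
  have hP : HasDerivAt (fun s => (R s)ᵀ) (R t * hat (Ω t))ᵀ t := transpose_deriv (hR t)
  have hu := mulVec_deriv hP hw
  have hercalc := cross_const_deriv (b := b) hu
  have herfun : er = fun s => ((R s)ᵀ.mulVec ((Rd s).mulVec b)) ⨯₃ b := funext her
  rw [herfun] at hder
  have hder_eq : er' = (((R t * hat (Ω t))ᵀ).mulVec rb
      + (R t)ᵀ.mulVec ((hat (ωd t) * Rd t).mulVec b + (Rd t).mulVec 0)) ⨯₃ b :=
    hder.unique hercalc
  -- algebraic simplification
  have hrot : ∀ x y : Fin 3 → ℝ,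
      (R t)ᵀ.mulVec (x ⨯₃ y) = ((R t)ᵀ.mulVec x) ⨯₃ ((R t)ᵀ.mulVec y) :=
    rot_cross _ (by rw [transpose_transpose]; exact hRRT)
      (by rw [det_transpose]; exact hdetRt)
  have h1 : ((R t * hat (Ω t))ᵀ).mulVec rb = -(Ω t ⨯₃ u) := by
    rw [Matrix.transpose_mul, hat_transpose, Matrix.neg_mul, Matrix.neg_mulVec,
      ← Matrix.mulVec_mulVec, hat_mulVec, ← hudef]
  have h2 : (R t)ᵀ.mulVec ((hat (ωd t) * Rd t).mulVec b + (Rd t).mulVec 0)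
      = ((R t)ᵀ.mulVec (ωd t)) ⨯₃ u := by
    rw [Matrix.mulVec_zero, add_zero, ← Matrix.mulVec_mulVec, hat_mulVec, hrot, ← hudef]
  have hval : er' = b ⨯₃ (eΩ t ⨯₃ u) := by
    rw [hder_eq, h1, h2, cross_algebra, heΩ t]
  -- the matrix identity for the first part
  have htarget : (hat b * hat (eΩ t) * (R t)ᵀ * Rd t).mulVec b = b ⨯₃ (eΩ t ⨯₃ u) := by
    rw [← Matrix.mulVec_mulVec, ← Matrix.mulVec_mulVec, ← Matrix.mulVec_mulVec,
      ← hrb, hat_mulVec, hat_mulVec, ← hudef]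
  -- norm of u
  have hM : ((R t)ᵀ * Rd t)ᵀ * ((R t)ᵀ * Rd t) = 1 := by
    rw [Matrix.transpose_mul, transpose_transpose, mul_assoc, ← mul_assoc (R t), hRRT,
      one_mul, hORd]
  have hu_norm : enorm3 u = 1 := by
    rw [hudef, hrb, Matrix.mulVec_mulVec, enorm_mulVec_orth _ hM, hb]
  refine ⟨by rw [hval, htarget], ?_⟩
  calc enorm3 er' = enorm3 (b ⨯₃ (eΩ t ⨯₃ u)) := by rw [hval]
    _ ≤ enorm3 b * enorm3 (eΩ t ⨯₃ u) := enorm_cross_le _ _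
    _ = enorm3 (eΩ t ⨯₃ u) := by rw [hb, one_mul]
    _ ≤ enorm3 (eΩ t) * enorm3 u := enorm_cross_le _ _
    _ = enorm3 (eΩ t) := by rw [hu_norm, mul_one]
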